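/- Let (A, H_B, H_dR, ∫) be as in the context. Then eval_∫ : P(A) → ℂ is injective (i.e. the period conjecture holds) if and only if the following implication holds: whenever M ∈ A, σ ∈ H_B(M) and ω ∈ H_dR(M)^∨ satisfy ω(∫_M(σ)) = 0, there exists an exact sequence 0 → N' → M → N → 0 in A such that σ lies in the image of H_B(N') in H_B(M) and ω lies in the image of H_dR(N)^∨ in H_dR(M)^∨. -/

import Mathlib

set_option maxHeartbeats 1000000
set_option synthInstance.maxHeartbeats 400000

open CategoryTheory CategoryTheory.Limits Module TensorProduct

universe v u

/-- A fiber functor on a `ℚ`-linear Abelian category, defined over a field `F ⊇ ℚ`: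
a `ℚ`-linear, exact, faithful functor into finite-dimensional `F`-vector spaces. -/
structure FiberFunctor (A : Type u) [Category.{v} A] [Abelian A] [CategoryTheory.Linear ℚ A]
    (F : Type) [Field F] [Algebra ℚ F] where
  H : A ⥤ ModuleCat.{0} F
  additive : H.Additive
  linear : ∀ (q : ℚ) {M N : A} (f : M ⟶ N), H.map (q • f) = (algebraMap ℚ F q) • H.map f
  exact_left : Limits.PreservesFiniteLimits H
  exact_right : Limits.PreservesFiniteColimits H
  faithful : H.Faithful
  finDim : ∀ M : A, FiniteDimensional F (H.obj M)

variable (A : Type u) [Category.{v} A] [Abelian A] [CategoryTheory.Linear ℚ A]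
variable (K : Subfield ℂ)
variable (HB : FiberFunctor A ℚ) (HdR : FiberFunctor A ↥K)

/-- The index type of the free module on symbols `(M, σ, ω)`. -/
abbrev PIdx := Σ M : A, (HB.H.obj M) × Module.Dual ↥K (HdR.H.obj M)

/-- The free `K`-module on symbols `(M, σ, ω)`. -/
abbrev FreeMod := PIdx A K HB HdR →₀ ↥K

/-- Generators of the relations defining `P(A)` as a quotient of the free `K`-module on
symbols `(σ ⊗ ω)_M`: bilinearity relations (making the quotient by them the direct sum
`⊕_M H_B(M) ⊗_ℚ H_dR(M)^∨`) together with the period relations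
`(σ ⊗ α^∨(ω))_M = (α(σ) ⊗ ω)_N` for morphisms `α : M ⟶ N`. -/
def RelGen (x : FreeMod A K HB HdR) : Prop :=
  (∃ (M : A) (σ σ' : HB.H.obj M) (ω : Module.Dual ↥K (HdR.H.obj M)),
      x = Finsupp.single ⟨M, (σ + σ', ω)⟩ 1 - Finsupp.single ⟨M, (σ, ω)⟩ 1
            - Finsupp.single ⟨M, (σ', ω)⟩ 1) ∨
  (∃ (M : A) (σ : HB.H.obj M) (ω ω' : Module.Dual ↥K (HdR.H.obj M)),
      x = Finsupp.single ⟨M, (σ, ω + ω')⟩ 1 - Finsupp.single ⟨M, (σ, ω)⟩ 1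
            - Finsupp.single ⟨M, (σ, ω')⟩ 1) ∨
  (∃ (M : A) (q : ℚ) (σ : HB.H.obj M) (ω : Module.Dual ↥K (HdR.H.obj M)),
      x = Finsupp.single ⟨M, (q • σ, ω)⟩ 1 - Finsupp.single ⟨M, (σ, ω)⟩ (algebraMap ℚ ↥K q)) ∨
  (∃ (M : A) (c : ↥K) (σ : HB.H.obj M) (ω : Module.Dual ↥K (HdR.H.obj M)),
      x = Finsupp.single ⟨M, (σ, c • ω)⟩ 1 - Finsupp.single ⟨M, (σ, ω)⟩ c) ∨
  (∃ (M N : A) (α : M ⟶ N) (σ : HB.H.obj M) (ω : Module.Dual ↥K (HdR.H.obj N)),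
      x = Finsupp.single ⟨M, (σ, ω.comp (HdR.H.map α).hom)⟩ 1
            - Finsupp.single ⟨N, (HB.H.map α σ, ω)⟩ 1)

/-- The submodule of relations. -/
noncomputable def PRel : Submodule ↥K (FreeMod A K HB HdR) :=
  Submodule.span ↥K {x | RelGen A K HB HdR x}

/-- The space of formal periods `P(A)`. -/
abbrev PA := FreeMod A K HB HdR ⧸ PRel A K HB HdR

/-- The class of the formal period `(σ ⊗ ω)_M` in `P(A)`. -/
noncomputable def per (M : A) (σ : HB.H.obj M) (ω : Module.Dual ↥K (HdR.H.obj M)) :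
    PA A K HB HdR :=
  Submodule.Quotient.mk (Finsupp.single ⟨M, (σ, ω)⟩ 1)

/-- A concrete theory of periods: a natural isomorphism `∫ : H_B ⊗_ℚ ℂ ≅ H_dR ⊗_K ℂ`. -/
structure PeriodPairing where
  int : ∀ M : A, (ℂ ⊗[ℚ] HB.H.obj M) ≃ₗ[ℂ] (ℂ ⊗[↥K] HdR.H.obj M)
  naturality : ∀ {M N : A} (f : M ⟶ N),
    (int N).toLinearMap ∘ₗ LinearMap.baseChange ℂ (HB.H.map f).hom
      = LinearMap.baseChange ℂ (HdR.H.map f).hom ∘ₗ (int M).toLinearMap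

/-- `∫_σ ω = ω(∫_M(σ))`. -/
noncomputable def evalInt (P : PeriodPairing A K HB HdR) (M : A) (σ : HB.H.obj M)
    (ω : Module.Dual ↥K (HdR.H.obj M)) : ℂ :=
  (TensorProduct.rid ↥K ℂ) ((LinearMap.baseChange ℂ ω) ((P.int M) ((1 : ℂ) ⊗ₜ[ℚ] σ)))

/-- The evaluation map on the free module on symbols `(σ ⊗ ω)_M`. -/
noncomputable def evalFree (P : PeriodPairing A K HB HdR) : FreeMod A K HB HdR →ₗ[↥K] ℂ :=
  Finsupp.lift ℂ ↥K (PIdx A K HB HdR) (fun t => evalInt A K HB HdR P t.1 t.2.1 t.2.2)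


set_option maxHeartbeats 4000000

attribute [local instance] CategoryTheory.Abelian.hasFiniteBiproducts

section Auxiliary
set_option linter.unusedSectionVars false

variable {A : Type u} [Category.{v} A] [Abelian A] [CategoryTheory.Linear ℚ A]
variable {F : Type} [Field F] [Algebra ℚ F]

instance fiberAdditive (T : FiberFunctor A F) : T.H.Additive := T.additive
instance fiberFaithful (T : FiberFunctor A F) : T.H.Faithful := T.faithful
instance fiberPFL (T : FiberFunctor A F) : PreservesFiniteLimits T.H := T.exact_left
instance fiberPFC (T : FiberFunctor A F) : PreservesFiniteColimits T.H := T.exact_right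
instance fiberFinDim (T : FiberFunctor A F) (M : A) : FiniteDimensional F (T.H.obj M) :=
  T.finDim M

/-- Exactness of the fiber functor: the range of `H (ker f ↪ X)` is the kernel of `H f`. -/
lemma fib_range_kernel (T : FiberFunctor A F) {X Y : A} (f : X ⟶ Y) :
    LinearMap.range (T.H.map (kernel.ι f)).hom = LinearMap.ker (T.H.map f).hom := by
  have h := (ShortComplex.exact_kernel f).map T.H
  rw [ShortComplex.moduleCat_exact_iff_range_eq_ker] at h
  exact h

/-- Exactness of the fiber functor: the range of `H f` is the kernel of `H (coker f)`. -/
lemma fib_range_cokernel (T : FiberFunctor A F) {X Y : A} (f : X ⟶ Y) :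
    LinearMap.range (T.H.map f).hom = LinearMap.ker (T.H.map (cokernel.π f)).hom := by
  have h := (ShortComplex.exact_cokernel f).map T.H
  rw [ShortComplex.moduleCat_exact_iff_range_eq_ker] at h
  exact h

lemma fib_surj (T : FiberFunctor A F) {X Y : A} (f : X ⟶ Y) [Epi f] :
    Function.Surjective (T.H.map f) := by
  rw [← ModuleCat.epi_iff_surjective]
  infer_instance

lemma fib_inj (T : FiberFunctor A F) {X Y : A} (f : X ⟶ Y) [Mono f] :
    Function.Injective (T.H.map f) := by
  rw [← ModuleCat.mono_iff_injective]
  infer_instance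

lemma fib_map_comp_apply (T : FiberFunctor A F) {X Y Z : A} (f : X ⟶ Y) (g : Y ⟶ Z)
    (x : T.H.obj X) : T.H.map (f ≫ g) x = T.H.map g (T.H.map f x) := by
  rw [T.H.map_comp]; rfl

lemma fib_isZero (T : FiberFunctor A F) {C : A} (h : ∀ x : T.H.obj C, x = 0) : IsZero C := by
  rw [IsZero.iff_id_eq_zero]
  apply T.H.map_injective
  rw [T.H.map_id, T.H.map_zero]
  ext x
  exact h x

lemma fib_mono (T : FiberFunctor A F) {X Y : A} (f : X ⟶ Y)
    (h : Function.Injective (T.H.map f)) : Mono f := by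
  have hz : IsZero (kernel f) := by
    apply fib_isZero T
    intro x
    have h0 : T.H.map f (T.H.map (kernel.ι f) x) = 0 := by
      rw [← fib_map_comp_apply, kernel.condition, T.H.map_zero]; rfl
    have : T.H.map (kernel.ι f) x = 0 := by
      apply h; rw [h0, map_zero]
    exact fib_inj T (kernel.ι f) (by rw [this, map_zero])
  apply Preadditive.mono_of_cancel_zero
  intro P g hg
  rw [← kernel.lift_ι f g hg, hz.eq_zero_of_src (kernel.ι f), comp_zero]

lemma fib_epi (T : FiberFunctor A F) {X Y : A} (f : X ⟶ Y)
    (h : Function.Surjective (T.H.map f)) : Epi f := by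
  have hz : IsZero (cokernel f) := by
    apply fib_isZero T
    intro x
    obtain ⟨y, hy⟩ := fib_surj T (cokernel.π f) x
    have : T.H.map (cokernel.π f) y = 0 := by
      have hmem : y ∈ LinearMap.ker (T.H.map (cokernel.π f)).hom := by
        rw [← fib_range_cokernel]
        rw [LinearMap.range_eq_top.2 h]; trivial
      exact hmem
    rw [← hy, this]
  apply Preadditive.epi_of_cancel_zero
  intro P g hg
  rw [← cokernel.π_desc f g hg, hz.eq_zero_of_src (cokernel.desc f g hg), comp_zero]

lemma fib_isIso (T : FiberFunctor A F) {X Y : A} (f : X ⟶ Y)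
    (h : Function.Bijective (T.H.map f)) : IsIso f := by
  have := fib_mono T f h.1
  have := fib_epi T f h.2
  exact isIso_of_mono_of_epi f

lemma fib_map_add_apply (T : FiberFunctor A F) {X Y : A} (f g : X ⟶ Y) (x : T.H.obj X) :
    T.H.map (f + g) x = T.H.map f x + T.H.map g x := by
  rw [T.H.map_add]; rfl

lemma biprod_elem_decomp (T : FiberFunctor A F) {P Q : A} (x : T.H.obj (P ⊞ Q)) :
    x = T.H.map biprod.inl (T.H.map biprod.fst x)
        + T.H.map biprod.inr (T.H.map biprod.snd x) := by
  calc x = T.H.map (𝟙 (P ⊞ Q)) x := by rw [T.H.map_id]; rfl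
    _ = T.H.map (biprod.fst ≫ biprod.inl + biprod.snd ≫ biprod.inr) x := by rw [biprod.total]
    _ = _ := by rw [fib_map_add_apply, fib_map_comp_apply, fib_map_comp_apply]

lemma fib_range_image (T : FiberFunctor A F) {X Y : A} (f : X ⟶ Y) :
    LinearMap.range (T.H.map (image.ι f)).hom = LinearMap.range (T.H.map f).hom := by
  conv_rhs => rw [← image.fac f]
  rw [T.H.map_comp, ModuleCat.hom_comp, LinearMap.range_comp,
      LinearMap.range_eq_top.2 (fib_surj T (factorThruImage f)), Submodule.map_top]

lemma biprod_desc_sub {X P Q : A} (p : P ⟶ X) (q : Q ⟶ X) :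
    biprod.desc p (-q) = biprod.fst ≫ p - biprod.snd ≫ q := by
  apply biprod.hom_ext' <;>
    simp [Preadditive.comp_sub]

lemma biprod_kernel_eq {X P Q : A} (p : P ⟶ X) (q : Q ⟶ X) :
    kernel.ι (biprod.desc p (-q)) ≫ biprod.fst ≫ p
      = kernel.ι (biprod.desc p (-q)) ≫ biprod.snd ≫ q := by
  have h2 : kernel.ι (biprod.desc p (-q)) ≫ (biprod.fst ≫ p - biprod.snd ≫ q) = 0 := by
    rw [← biprod_desc_sub]; exact kernel.condition _
  rw [Preadditive.comp_sub, sub_eq_zero] at h2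
  simpa using h2

lemma biprod_kernel_chase (T : FiberFunctor A F) {X P Q : A} (p : P ⟶ X) (q : Q ⟶ X)
    {a : T.H.obj P} {b : T.H.obj Q} (hab : T.H.map p a = T.H.map q b) :
    ∃ t, T.H.map (kernel.ι (biprod.desc p (-q)) ≫ biprod.fst) t = a ∧
         T.H.map (kernel.ι (biprod.desc p (-q)) ≫ biprod.snd) t = b := by
  set δ := biprod.desc p (-q) with hδ
  have hδw : T.H.map δ (T.H.map biprod.inl a + T.H.map biprod.inr b) = 0 := by
    have e1 : T.H.map δ (T.H.map biprod.inl a) = T.H.map p a := by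
      rw [← fib_map_comp_apply, show biprod.inl ≫ δ = p by simp [hδ]]
    have e2 : T.H.map δ (T.H.map biprod.inr b) = - T.H.map q b := by
      rw [← fib_map_comp_apply, show biprod.inr ≫ δ = -q by simp [hδ], T.H.map_neg]
      rfl
    rw [map_add, e1, e2, hab, add_neg_cancel]
  obtain ⟨t, ht⟩ : (T.H.map biprod.inl a + T.H.map biprod.inr b)
      ∈ LinearMap.range (T.H.map (kernel.ι δ)).hom := by
    rw [fib_range_kernel]; exact hδw
  have hfst : T.H.map (kernel.ι δ ≫ biprod.fst) t = a := by
    rw [fib_map_comp_apply, ht, map_add, ← fib_map_comp_apply, ← fib_map_comp_apply,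
        biprod.inl_fst, biprod.inr_fst, T.H.map_id, T.H.map_zero]
    simp
  have hsnd : T.H.map (kernel.ι δ ≫ biprod.snd) t = b := by
    rw [fib_map_comp_apply, ht, map_add, ← fib_map_comp_apply, ← fib_map_comp_apply,
        biprod.inl_snd, biprod.inr_snd, T.H.map_id, T.H.map_zero]
    simp
  exact ⟨t, hfst, hsnd⟩

/-- Existence of a mono through which `s` factors, whose `H`-range is minimal. -/
lemma min_member (T : FiberFunctor A F) {X : A} (s : T.H.obj X) :
    ∃ (G : A) (m : G ⟶ X), Mono m ∧ s ∈ LinearMap.range (T.H.map m).hom ∧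
      ∀ (C : A) (c : C ⟶ X), s ∈ LinearMap.range (T.H.map c).hom →
        LinearMap.range (T.H.map m).hom ≤ LinearMap.range (T.H.map c).hom := by
  classical
  set S : Set ℕ := {n | ∃ (C : A) (c : C ⟶ X), s ∈ LinearMap.range (T.H.map c).hom ∧
      Module.finrank F (LinearMap.range (T.H.map c).hom) = n} with hS
  have hmemS : Module.finrank F (LinearMap.range (T.H.map (𝟙 X)).hom) ∈ S := by
    rw [hS]
    simp only [Set.mem_setOf_eq]
    exact ⟨X, 𝟙 X, LinearMap.mem_range.mpr ⟨s, by rw [T.H.map_id]; rfl⟩, rfl⟩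
  have hSne : S.Nonempty := ⟨_, hmemS⟩
  obtain ⟨C₀, c₀, hmem₀, hrank₀⟩ := Nat.sInf_mem hSne
  have hIm : s ∈ LinearMap.range (T.H.map (image.ι c₀)).hom := by
    rw [fib_range_image]; exact hmem₀
  have hrkIm : Module.finrank F (LinearMap.range (T.H.map (image.ι c₀)).hom) = sInf S := by
    rw [fib_range_image]; exact hrank₀
  refine ⟨image c₀, image.ι c₀, inferInstance, hIm, ?_⟩
  intro C c hc
  set m := image.ι c₀ with hm
  obtain ⟨a, ha⟩ := hIm
  obtain ⟨b, hb⟩ := hc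
  obtain ⟨t, hta, htb⟩ := biprod_kernel_chase T m c (a := a) (b := b) (by rw [ha, hb])
  set k := kernel.ι (biprod.desc m (-c)) with hk
  have hmem' : s ∈ LinearMap.range (T.H.map ((k ≫ biprod.fst) ≫ m)).hom := by
    refine ⟨t, ?_⟩
    rw [fib_map_comp_apply, hta, ha]
  have hle1 : LinearMap.range (T.H.map ((k ≫ biprod.fst) ≫ m)).hom ≤
      LinearMap.range (T.H.map m).hom := by
    rw [T.H.map_comp, ModuleCat.hom_comp]
    exact LinearMap.range_comp_le_range _ _
  have heq : LinearMap.range (T.H.map ((k ≫ biprod.fst) ≫ m)).hom =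
      LinearMap.range (T.H.map m).hom := by
    apply Submodule.eq_of_le_of_finrank_le hle1
    rw [hrkIm]
    exact Nat.sInf_le ⟨_, _, hmem', rfl⟩
  have hcomp : (k ≫ biprod.fst) ≫ m = (k ≫ biprod.snd) ≫ c := by
    rw [Category.assoc, Category.assoc]
    exact biprod_kernel_eq m c
  rw [← heq, hcomp, T.H.map_comp, ModuleCat.hom_comp]
  exact LinearMap.range_comp_le_range _ _

/-- Factorization through a mono with larger `H`-range. -/
lemma fib_factor (T : FiberFunctor A F) {X A₀ D : A} (iA : A₀ ⟶ X) (d : D ⟶ X)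
    [Mono iA] [Mono d]
    (hle : LinearMap.range (T.H.map iA).hom ≤ LinearMap.range (T.H.map d).hom) :
    ∃ j : A₀ ⟶ D, j ≫ d = iA := by
  set k := kernel.ι (biprod.desc iA (-d)) with hk
  have hcomp : (k ≫ biprod.fst) ≫ iA = (k ≫ biprod.snd) ≫ d := by
    rw [Category.assoc, Category.assoc]; exact biprod_kernel_eq iA d
  have hsurj : Function.Surjective (T.H.map (k ≫ biprod.fst)) := by
    intro a
    obtain ⟨b, hb⟩ := hle ⟨a, rfl⟩
    obtain ⟨t, hta, _⟩ := biprod_kernel_chase T iA d (a := a) (b := b) hb.symm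
    exact ⟨t, hta⟩
  have hinj : Function.Injective (T.H.map (k ≫ biprod.fst)) := by
    intro t₁ t₂ hts
    have hsub : T.H.map (k ≫ biprod.fst) (t₁ - t₂) = 0 := by
      rw [map_sub, hts, sub_self]
    have hsnd : T.H.map (k ≫ biprod.snd) (t₁ - t₂) = 0 := by
      apply fib_inj T d
      rw [← fib_map_comp_apply, ← hcomp, fib_map_comp_apply, hsub]
      simp
    rw [fib_map_comp_apply] at hsub hsnd
    have hkt : T.H.map k (t₁ - t₂) = 0 := by
      rw [biprod_elem_decomp T (T.H.map k (t₁ - t₂)), hsub, hsnd, map_zero, map_zero,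
        add_zero]
    haveI : Mono k := by rw [hk]; infer_instance
    have h0 : t₁ - t₂ = 0 := by
      apply fib_inj T k
      rw [hkt, map_zero]
    exact sub_eq_zero.mp h0
  have : IsIso (k ≫ biprod.fst) := fib_isIso T _ ⟨hinj, hsurj⟩
  refine ⟨inv (k ≫ biprod.fst) ≫ k ≫ biprod.snd, ?_⟩
  rw [← cancel_epi (k ≫ biprod.fst)]
  calc (k ≫ biprod.fst) ≫ (inv (k ≫ biprod.fst) ≫ k ≫ biprod.snd) ≫ d
      = ((k ≫ biprod.fst) ≫ inv (k ≫ biprod.fst)) ≫ (k ≫ biprod.snd) ≫ d := by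
        simp only [Category.assoc]
    _ = (k ≫ biprod.snd) ≫ d := by rw [IsIso.hom_inv_id, Category.id_comp]
    _ = (k ≫ biprod.fst) ≫ iA := hcomp.symm

end Auxiliary


section Master
set_option linter.unusedSectionVars false

variable {A : Type u} [Category.{v} A] [Abelian A] [CategoryTheory.Linear ℚ A]
variable {K : Subfield ℂ} {HB : FiberFunctor A ℚ} {HdR : FiberFunctor A ↥K}

/-- **Nori-style master lemma.** For `s ∈ H_B(X)` there is a minimal subobject `A₀ ⟶ X`
through whose Betti realization `s` factors, and every de Rham class `ξ` supported on `A₀`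
is the value at `s` of some `End(X)`-equivariant `ℚ`-linear map `H_B(X) → H_dR(X)`. -/
lemma master_equivariant {X : A} (s : HB.H.obj X) :
    ∃ (A₀ : A) (iA : A₀ ⟶ X), Mono iA ∧ s ∈ LinearMap.range (HB.H.map iA).hom ∧
      ∀ ξ ∈ LinearMap.range (HdR.H.map iA).hom,
        ∃ u : HB.H.obj X → HdR.H.obj X,
          (∀ a b, u (a + b) = u a + u b) ∧
          (∀ (q : ℚ) (a : HB.H.obj X), u (q • a) = algebraMap ℚ ↥K q • u a) ∧
          (∀ (f : X ⟶ X) (a : HB.H.obj X), u (HB.H.map f a) = HdR.H.map f (u a)) ∧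
          u s = ξ := by
  classical
  set n := Module.finrank ℚ (HB.H.obj X) with hn
  set bas := Module.finBasis ℚ (HB.H.obj X) with hbas
  set vhat : HB.H.obj (⨁ (fun _ : Fin n => X)) :=
    ∑ i : Fin n, HB.H.map (biproduct.ι (fun _ : Fin n => X) i) (bas i) with hvhat
  have hproj : ∀ i : Fin n, HB.H.map (biproduct.π (fun _ : Fin n => X) i) vhat = bas i := by
    intro i
    rw [hvhat, map_sum, Finset.sum_eq_single i]
    · rw [← fib_map_comp_apply, biproduct.ι_π_self, HB.H.map_id]; rfl
    · intro j _ hj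
      rw [← fib_map_comp_apply, biproduct.ι_π_ne _ hj, HB.H.map_zero]; rfl
    · intro h; exact absurd (Finset.mem_univ i) h
  obtain ⟨G, m, hmono, hwmem, hmin⟩ := min_member HB vhat
  haveI := hmono
  obtain ⟨w, hw⟩ := hwmem
  set ev : (G ⟶ X) →ₗ[ℚ] HB.H.obj X :=
    { toFun := fun φ => HB.H.map φ w
      map_add' := by
        intro φ ψ
        show HB.H.map (φ + ψ) w = HB.H.map φ w + HB.H.map ψ w
        rw [HB.H.map_add]; rfl
      map_smul' := by
        intro q φ
        show HB.H.map (q • φ) w = (RingHom.id ℚ) q • HB.H.map φ w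
        rw [HB.linear q φ]
        simp only [Algebra.algebraMap_self, RingHom.id_apply]
        rfl } with hev
  have hev_apply : ∀ φ : G ⟶ X, ev φ = HB.H.map φ w := fun _ => rfl
  have hinj0 : ∀ φ : G ⟶ X, HB.H.map φ w = 0 → φ = 0 := by
    intro φ hφ
    have hwk : w ∈ LinearMap.ker (HB.H.map φ).hom := hφ
    rw [← fib_range_kernel] at hwk
    obtain ⟨w', hw'⟩ := hwk
    have hmem : vhat ∈ LinearMap.range (HB.H.map (kernel.ι φ ≫ m)).hom :=
      ⟨w', by rw [fib_map_comp_apply, hw', hw]⟩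
    have hle := hmin _ _ hmem
    have hrange : LinearMap.range (HB.H.map (kernel.ι φ ≫ m)).hom
        = LinearMap.range (HB.H.map m).hom := by
      apply le_antisymm ?_ hle
      rw [HB.H.map_comp, ModuleCat.hom_comp]
      exact LinearMap.range_comp_le_range _ _
    have hsurjk : Function.Surjective (HB.H.map (kernel.ι φ)) := by
      intro x
      obtain ⟨y, hy⟩ : HB.H.map m x ∈ LinearMap.range (HB.H.map (kernel.ι φ ≫ m)).hom := by
        rw [hrange]; exact ⟨x, rfl⟩
      refine ⟨y, fib_inj HB m ?_⟩
      rw [← fib_map_comp_apply]; exact hy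
    haveI : IsIso (kernel.ι φ) := fib_isIso HB _ ⟨fib_inj HB _, hsurjk⟩
    rw [← cancel_epi (kernel.ι φ), comp_zero]
    exact kernel.condition φ
  have hinj : Function.Injective ev := by
    intro φ ψ h
    have : ev (φ - ψ) = 0 := by rw [map_sub, h, sub_self]
    have := hinj0 _ ((hev_apply (φ - ψ)) ▸ this)
    exact sub_eq_zero.mp this
  have hsurj : Function.Surjective ev := by
    intro τ
    refine ⟨∑ i : Fin n, (bas.repr τ i) • (m ≫ biproduct.π (fun _ : Fin n => X) i), ?_⟩
    rw [map_sum]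
    have hevi : ∀ i : Fin n, ev (m ≫ biproduct.π (fun _ : Fin n => X) i) = bas i := by
      intro i
      rw [hev_apply, fib_map_comp_apply, hw, hproj]
    calc ∑ i : Fin n, ev ((bas.repr τ i) • (m ≫ biproduct.π (fun _ : Fin n => X) i))
        = ∑ i : Fin n, (bas.repr τ i) • bas i := by
          apply Finset.sum_congr rfl
          intro i _
          rw [map_smul, hevi]
      _ = τ := bas.sum_repr τ
  set equiv := LinearEquiv.ofBijective ev ⟨hinj, hsurj⟩ with hequiv
  have hequiv_apply : ∀ φ : G ⟶ X, equiv φ = HB.H.map φ w := fun _ => rfl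
  obtain ⟨A₀, iA, hmonoA, hsmem, hminA⟩ := min_member HB s
  haveI := hmonoA
  set φσ : G ⟶ X := equiv.symm s with hφσ
  have hφσs : HB.H.map φσ w = s := by
    rw [← hequiv_apply, hφσ, LinearEquiv.apply_symm_apply]
  refine ⟨A₀, iA, hmonoA, hsmem, ?_⟩
  intro ξ hξ
  -- factor `iA` through the image of `φσ`
  have hsmem' : s ∈ LinearMap.range (HB.H.map (image.ι φσ)).hom := by
    rw [fib_range_image]
    exact ⟨w, hφσs⟩
  obtain ⟨j, hj⟩ := fib_factor HB iA (image.ι φσ) (hminA _ _ hsmem')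
  have hξ' : ξ ∈ LinearMap.range (HdR.H.map φσ).hom := by
    rw [← fib_range_image]
    obtain ⟨z, hz⟩ := hξ
    rw [← hj] at hz
    exact ⟨HdR.H.map j z, by rw [← fib_map_comp_apply]; exact hz⟩
  obtain ⟨wD, hwD⟩ := hξ'
  refine ⟨fun a => HdR.H.map (equiv.symm a) wD, ?_, ?_, ?_, ?_⟩
  · intro a b
    show HdR.H.map (equiv.symm (a + b)) wD
        = HdR.H.map (equiv.symm a) wD + HdR.H.map (equiv.symm b) wD
    rw [map_add, HdR.H.map_add]; rfl
  · intro q a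
    show HdR.H.map (equiv.symm (q • a)) wD = algebraMap ℚ ↥K q • HdR.H.map (equiv.symm a) wD
    rw [map_smul, HdR.linear q]
    rfl
  · intro f a
    have hsymm : equiv.symm (HB.H.map f a) = equiv.symm a ≫ f := by
      rw [LinearEquiv.symm_apply_eq, hequiv_apply, fib_map_comp_apply, ← hequiv_apply,
        LinearEquiv.apply_symm_apply]
    show HdR.H.map (equiv.symm (HB.H.map f a)) wD
        = HdR.H.map f (HdR.H.map (equiv.symm a) wD)
    rw [hsymm, fib_map_comp_apply]
  · show HdR.H.map (equiv.symm s) wD = ξ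
    exact hwD

end Master


section PerCalculus
set_option linter.unusedSectionVars false

variable {A : Type u} [Category.{v} A] [Abelian A] [CategoryTheory.Linear ℚ A]
variable {K : Subfield ℂ} {HB : FiberFunctor A ℚ} {HdR : FiberFunctor A ↥K}

lemma per_relgen {x y : FreeMod A K HB HdR} (h : RelGen A K HB HdR (x - y)) :
    (Submodule.Quotient.mk x : PA A K HB HdR) = Submodule.Quotient.mk y := by
  rw [Submodule.Quotient.eq]
  exact Submodule.subset_span h

lemma per_addL (M : A) (σ σ' : HB.H.obj M) (ω : Module.Dual ↥K (HdR.H.obj M)) :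
    per A K HB HdR M (σ + σ') ω = per A K HB HdR M σ ω + per A K HB HdR M σ' ω := by
  unfold per
  rw [← Submodule.Quotient.mk_add]
  apply per_relgen
  refine Or.inl ⟨M, σ, σ', ω, ?_⟩
  rw [sub_add_eq_sub_sub]

lemma per_addR (M : A) (σ : HB.H.obj M) (ω ω' : Module.Dual ↥K (HdR.H.obj M)) :
    per A K HB HdR M σ (ω + ω') = per A K HB HdR M σ ω + per A K HB HdR M σ ω' := by
  unfold per
  rw [← Submodule.Quotient.mk_add]
  apply per_relgen
  refine Or.inr (Or.inl ⟨M, σ, ω, ω', ?_⟩)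
  rw [sub_add_eq_sub_sub]

lemma per_smulR (M : A) (σ : HB.H.obj M) (c : ↥K) (ω : Module.Dual ↥K (HdR.H.obj M)) :
    per A K HB HdR M σ (c • ω) = c • per A K HB HdR M σ ω := by
  unfold per
  rw [← Submodule.Quotient.mk_smul]
  apply per_relgen
  refine Or.inr (Or.inr (Or.inr (Or.inl ⟨M, c, σ, ω, ?_⟩)))
  rw [Finsupp.smul_single, smul_eq_mul, mul_one]

lemma per_qsmulL (M : A) (q : ℚ) (σ : HB.H.obj M) (ω : Module.Dual ↥K (HdR.H.obj M)) :
    per A K HB HdR M (q • σ) ω = (algebraMap ℚ ↥K q) • per A K HB HdR M σ ω := by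
  unfold per
  rw [← Submodule.Quotient.mk_smul]
  apply per_relgen
  refine Or.inr (Or.inr (Or.inl ⟨M, q, σ, ω, ?_⟩))
  rw [Finsupp.smul_single, smul_eq_mul, mul_one]

lemma per_mor {M N : A} (α : M ⟶ N) (σ : HB.H.obj M) (ω : Module.Dual ↥K (HdR.H.obj N)) :
    per A K HB HdR M σ (ω.comp (HdR.H.map α).hom) = per A K HB HdR N (HB.H.map α σ) ω := by
  apply per_relgen
  exact Or.inr (Or.inr (Or.inr (Or.inr ⟨M, N, α, σ, ω, rfl⟩)))

lemma per_zeroR (M : A) (σ : HB.H.obj M) : per A K HB HdR M σ 0 = 0 := by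
  have h : per A K HB HdR M σ ((0 : ↥K) • (0 : Module.Dual ↥K (HdR.H.obj M)))
      = (0 : ↥K) • per A K HB HdR M σ 0 := per_smulR M σ 0 0
  rw [zero_smul ↥K (0 : Module.Dual ↥K (HdR.H.obj M)),
      zero_smul ↥K (per A K HB HdR M σ 0)] at h
  exact h

lemma per_zeroL (M : A) (ω : Module.Dual ↥K (HdR.H.obj M)) : per A K HB HdR M 0 ω = 0 := by
  have h : per A K HB HdR M ((0 : HB.H.obj M) + 0) ω
      = per A K HB HdR M 0 ω + per A K HB HdR M 0 ω := per_addL M 0 0 ω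
  rw [add_zero] at h
  exact (left_eq_add.mp h)

lemma per_pair (X Y : A) (σ : HB.H.obj X) (τ : HB.H.obj Y)
    (ω : Module.Dual ↥K (HdR.H.obj X)) (lam : Module.Dual ↥K (HdR.H.obj Y)) :
    per A K HB HdR (X ⊞ Y) (HB.H.map biprod.inl σ + HB.H.map biprod.inr τ)
        (ω.comp (HdR.H.map biprod.fst).hom + lam.comp (HdR.H.map biprod.snd).hom)
      = per A K HB HdR X σ ω + per A K HB HdR Y τ lam := by
  rw [per_addL, per_addR, per_addR]
  have h11 : per A K HB HdR (X ⊞ Y) (HB.H.map biprod.inl σ) (ω.comp (HdR.H.map biprod.fst).hom)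
      = per A K HB HdR X σ ω := by
    rw [per_mor biprod.fst, ← fib_map_comp_apply, biprod.inl_fst, HB.H.map_id]
    rfl
  have h12 : per A K HB HdR (X ⊞ Y) (HB.H.map biprod.inl σ) (lam.comp (HdR.H.map biprod.snd).hom)
      = 0 := by
    rw [per_mor biprod.snd, ← fib_map_comp_apply, biprod.inl_snd, HB.H.map_zero]
    exact per_zeroL Y lam
  have h21 : per A K HB HdR (X ⊞ Y) (HB.H.map biprod.inr τ) (ω.comp (HdR.H.map biprod.fst).hom)
      = 0 := by
    rw [per_mor biprod.fst, ← fib_map_comp_apply, biprod.inr_fst, HB.H.map_zero]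
    exact per_zeroL X ω
  have h22 : per A K HB HdR (X ⊞ Y) (HB.H.map biprod.inr τ) (lam.comp (HdR.H.map biprod.snd).hom)
      = per A K HB HdR Y τ lam := by
    rw [per_mor biprod.snd, ← fib_map_comp_apply, biprod.inr_snd, HB.H.map_id]
    rfl
  rw [h11, h12, h21, h22]
  abel

lemma per_repr [Nonempty A] (x : FreeMod A K HB HdR) :
    ∃ (X : A) (σ : HB.H.obj X) (ω : Module.Dual ↥K (HdR.H.obj X)),
      (Submodule.Quotient.mk x : PA A K HB HdR) = per A K HB HdR X σ ω := by
  induction x using Finsupp.induction_linear with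
  | zero =>
    obtain ⟨M₀⟩ := ‹Nonempty A›
    exact ⟨M₀, 0, 0, by rw [Submodule.Quotient.mk_zero, per_zeroL]⟩
  | add f g ihf ihg =>
    obtain ⟨X, σ, ω, hX⟩ := ihf
    obtain ⟨Y, τ, lam, hY⟩ := ihg
    refine ⟨X ⊞ Y, HB.H.map biprod.inl σ + HB.H.map biprod.inr τ,
      ω.comp (HdR.H.map biprod.fst).hom + lam.comp (HdR.H.map biprod.snd).hom, ?_⟩
    rw [Submodule.Quotient.mk_add, hX, hY, per_pair]
  | single a b =>
    obtain ⟨M, σω⟩ := a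
    obtain ⟨σ, ω⟩ := σω
    refine ⟨M, σ, b • ω, ?_⟩
    rw [per_smulR]
    show (Submodule.Quotient.mk (Finsupp.single ⟨M, (σ, ω)⟩ b) : PA A K HB HdR)
      = b • Submodule.Quotient.mk (Finsupp.single ⟨M, (σ, ω)⟩ 1)
    rw [← Submodule.Quotient.mk_smul, Finsupp.smul_single, smul_eq_mul, mul_one]

lemma evalFree_single (P : PeriodPairing A K HB HdR) (M : A) (σ : HB.H.obj M)
    (ω : Module.Dual ↥K (HdR.H.obj M)) :
    evalFree A K HB HdR P (Finsupp.single ⟨M, (σ, ω)⟩ 1) = evalInt A K HB HdR P M σ ω := by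
  unfold evalFree
  rw [Finsupp.lift_apply, Finsupp.sum_single_index (by rw [zero_smul]), one_smul]

end PerCalculus

/-- **Theorem (Corollary `KORAB`).** The period conjecture (injectivity of
`eval_∫ : P(A) → ℂ`) holds if and only if every vanishing period `∫_σ ω = 0` on an object
`M` is explained by an exact sequence `0 → N' → M → N → 0` with `σ ∈ H_B(N')` and
`ω ∈ H_dR(N)^∨`. -/
theorem period_conjecture_iff (P : PeriodPairing A K HB HdR)
    (hRel : PRel A K HB HdR ≤ LinearMap.ker (evalFree A K HB HdR P)) :
    Function.Injective ((PRel A K HB HdR).liftQ (evalFree A K HB HdR P) hRel) ↔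
      (∀ (M : A) (σ : HB.H.obj M) (ω : Module.Dual ↥K (HdR.H.obj M)),
        evalInt A K HB HdR P M σ ω = 0 →
        ∃ (N' N : A) (f : N' ⟶ M) (g : M ⟶ N) (w : f ≫ g = 0),
          (ShortComplex.mk f g w).ShortExact ∧
          σ ∈ LinearMap.range (HB.H.map f).hom ∧
          ω ∈ LinearMap.range (LinearMap.dualMap (HdR.H.map g).hom)) := by
  classical
  constructor
  · -- Forward direction: injectivity implies the exact sequence criterion.
    intro hinj M σ ω hvanish
    -- The formal period vanishes in `P(A)`.
    have hsingle0 : (Submodule.Quotient.mk (Finsupp.single ⟨M, (σ, ω)⟩ (1 : ↥K)) :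
        PA A K HB HdR) = 0 := by
      apply hinj
      rw [map_zero, Submodule.liftQ_apply, evalFree_single]
      exact hvanish
    have hmem : (Finsupp.single ⟨M, (σ, ω)⟩ (1 : ↥K)) ∈ PRel A K HB HdR := by
      rwa [Submodule.Quotient.mk_eq_zero] at hsingle0
    obtain ⟨T, hTsub, hTspan⟩ := Submodule.mem_span_finite_of_mem_span hmem
    -- Collect the objects appearing in the morphism-type relations of `T`.
    let P5 : FreeMod A K HB HdR → Prop := fun t =>
      ∃ (M₁ N₁ : A) (α : M₁ ⟶ N₁) (σ₁ : HB.H.obj M₁)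
        (ω₁ : Module.Dual ↥K (HdR.H.obj N₁)),
        t = Finsupp.single ⟨M₁, (σ₁, ω₁.comp (HdR.H.map α).hom)⟩ 1
              - Finsupp.single ⟨N₁, (HB.H.map α σ₁, ω₁)⟩ 1
    let wobj : FreeMod A K HB HdR → Finset A := fun t =>
      if h : P5 t then {h.choose, h.choose_spec.choose} else ∅
    let O : Finset A := insert M (T.biUnion wobj)
    have hMO : M ∈ O := Finset.mem_insert_self _ _
    let Xb : A := ⨁ (fun z : {x // x ∈ O} => (z : A))
    let ib : ∀ (Z : A), Z ∈ O → (Z ⟶ Xb) :=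
      fun Z h => biproduct.ι (fun z : {x // x ∈ O} => (z : A)) ⟨Z, h⟩
    let pb : ∀ (Z : A), Z ∈ O → (Xb ⟶ Z) :=
      fun Z h => biproduct.π (fun z : {x // x ∈ O} => (z : A)) ⟨Z, h⟩
    have hip : ∀ (Z : A) (h : Z ∈ O), ib Z h ≫ pb Z h = 𝟙 Z :=
      fun Z h => biproduct.ι_π_self _ _
    set st : HB.H.obj Xb := HB.H.map (ib M hMO) σ with hst
    obtain ⟨A₀, iA, hmonoA, hsmem, hu⟩ := master_equivariant (HdR := HdR) st
    haveI := hmonoA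
    by_cases hcase : ∀ ξ ∈ LinearMap.range (HdR.H.map iA).hom, ω (HdR.H.map (pb M hMO) ξ) = 0
    · -- Case: `ω` kills the de Rham realization of the minimal subobject. Build the SES.
      refine ⟨kernel (ib M hMO ≫ cokernel.π iA),
        cokernel (kernel.ι (ib M hMO ≫ cokernel.π iA)),
        kernel.ι (ib M hMO ≫ cokernel.π iA),
        cokernel.π (kernel.ι (ib M hMO ≫ cokernel.π iA)),
        cokernel.condition _, ?_, ?_, ?_⟩
      · exact { exact := ShortComplex.exact_cokernel _ }
      · rw [fib_range_kernel, LinearMap.mem_ker, fib_map_comp_apply, ← hst]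
        have hker : st ∈ LinearMap.ker (HB.H.map (cokernel.π iA)).hom := by
          rw [← fib_range_cokernel]; exact hsmem
        exact hker
      · rw [LinearMap.range_dualMap_eq_dualAnnihilator_ker]
        rw [Submodule.mem_dualAnnihilator]
        intro x hx
        have hx' : x ∈ LinearMap.range (HdR.H.map (kernel.ι (ib M hMO ≫ cokernel.π iA))).hom := by
          rw [fib_range_cokernel]; exact hx
        obtain ⟨y, hy⟩ := hx'
        have hxker : x ∈ LinearMap.ker (HdR.H.map (ib M hMO ≫ cokernel.π iA)).hom := by
          rw [← fib_range_kernel]; exact ⟨y, hy⟩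
        rw [LinearMap.mem_ker, fib_map_comp_apply] at hxker
        have hximg : HdR.H.map (ib M hMO) x ∈ LinearMap.range (HdR.H.map iA).hom := by
          rw [fib_range_cokernel]; exact hxker
        have hxdec : x = HdR.H.map (pb M hMO) (HdR.H.map (ib M hMO) x) := by
          rw [← fib_map_comp_apply, hip, HdR.H.map_id]; rfl
        rw [hxdec]
        exact hcase _ hximg
    · -- Case: `ω` does not kill it: contradiction with the relation membership.
      exfalso
      push_neg at hcase
      obtain ⟨ξ, hξmem, hξne⟩ := hcase
      obtain ⟨u, hu_add, hu_smul, hu_eq, hu_val⟩ := hu ξ hξmem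
      let uZ : ∀ Z : A, HB.H.obj Z → HdR.H.obj Z := fun Z =>
        if h : Z ∈ O then (fun τ => HdR.H.map (pb Z h) (u (HB.H.map (ib Z h) τ))) else 0
      have huZO : ∀ (Z : A) (h : Z ∈ O) (τ : HB.H.obj Z),
          uZ Z τ = HdR.H.map (pb Z h) (u (HB.H.map (ib Z h) τ)) := by
        intro Z h τ
        simp only [uZ, dif_pos h]
      have huZ_add : ∀ (Z : A) (a b : HB.H.obj Z), uZ Z (a + b) = uZ Z a + uZ Z b := by
        intro Z a b
        by_cases h : Z ∈ O
        · rw [huZO Z h, huZO Z h, huZO Z h, map_add, hu_add, map_add]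
        · simp only [uZ, dif_neg h, Pi.zero_apply, add_zero]
      have huZ_smul : ∀ (Z : A) (q : ℚ) (a : HB.H.obj Z),
          uZ Z (q • a) = algebraMap ℚ ↥K q • uZ Z a := by
        intro Z q a
        by_cases h : Z ∈ O
        · rw [huZO Z h, huZO Z h, map_smul, hu_smul, map_smul]
        · simp only [uZ, dif_neg h, Pi.zero_apply, smul_zero]
      have huZ_nat : ∀ (Z Z' : A) (hZ : Z ∈ O) (hZ' : Z' ∈ O) (α : Z ⟶ Z')
          (τ : HB.H.obj Z), HdR.H.map α (uZ Z τ) = uZ Z' (HB.H.map α τ) := by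
        intro Z Z' hZ hZ' α τ
        rw [huZO Z hZ, huZO Z' hZ']
        have h1 : HB.H.map (ib Z' hZ') (HB.H.map α τ)
            = HB.H.map (pb Z hZ ≫ α ≫ ib Z' hZ') (HB.H.map (ib Z hZ) τ) := by
          rw [← fib_map_comp_apply, ← fib_map_comp_apply]
          congr 1
          rw [show ib Z hZ ≫ pb Z hZ ≫ α ≫ ib Z' hZ'
              = (ib Z hZ ≫ pb Z hZ) ≫ α ≫ ib Z' hZ' by simp only [Category.assoc],
            hip, Category.id_comp]
        have h2 : pb Z hZ ≫ α = (pb Z hZ ≫ α ≫ ib Z' hZ') ≫ pb Z' hZ' := by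
          simp only [Category.assoc, hip Z' hZ', Category.comp_id]
        calc HdR.H.map α (HdR.H.map (pb Z hZ) (u (HB.H.map (ib Z hZ) τ)))
            = HdR.H.map (pb Z hZ ≫ α) (u (HB.H.map (ib Z hZ) τ)) := by
              rw [fib_map_comp_apply]
          _ = HdR.H.map ((pb Z hZ ≫ α ≫ ib Z' hZ') ≫ pb Z' hZ')
                (u (HB.H.map (ib Z hZ) τ)) := by rw [← h2]
          _ = HdR.H.map (pb Z' hZ')
                (HdR.H.map (pb Z hZ ≫ α ≫ ib Z' hZ') (u (HB.H.map (ib Z hZ) τ))) := by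
              rw [fib_map_comp_apply]
          _ = HdR.H.map (pb Z' hZ')
                (u (HB.H.map (pb Z hZ ≫ α ≫ ib Z' hZ') (HB.H.map (ib Z hZ) τ))) := by
              rw [hu_eq]
          _ = HdR.H.map (pb Z' hZ') (u (HB.H.map (ib Z' hZ') (HB.H.map α τ))) := by
              rw [h1]
      let coef : PIdx A K HB HdR → ↥K := fun z => z.2.2 (uZ z.1 z.2.1)
      let φ : FreeMod A K HB HdR →ₗ[↥K] ↥K := Finsupp.lift ↥K ↥K (PIdx A K HB HdR) coef
      have hφsingle : ∀ (z : PIdx A K HB HdR) (c : ↥K),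
          φ (Finsupp.single z c) = c * coef z := by
        intro z c
        show (Finsupp.lift ↥K ↥K (PIdx A K HB HdR) coef) (Finsupp.single z c) = c * coef z
        rw [Finsupp.lift_apply, Finsupp.sum_single_index (by rw [zero_smul]), smul_eq_mul]
      have hφT : ∀ t ∈ T, φ t = 0 := by
        intro t ht
        have hR : RelGen A K HB HdR t := hTsub ht
        rcases hR with ⟨M₁, σ₁, σ₂, ω₁, ht⟩ | ⟨M₁, σ₁, ω₁, ω₂, ht⟩ |
          ⟨M₁, q, σ₁, ω₁, ht⟩ | ⟨M₁, c, σ₁, ω₁, ht⟩ | h5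
        · rw [ht, map_sub, map_sub, hφsingle, hφsingle, hφsingle, one_mul, one_mul, one_mul]
          show ω₁ (uZ M₁ (σ₁ + σ₂)) - ω₁ (uZ M₁ σ₁) - ω₁ (uZ M₁ σ₂) = 0
          rw [huZ_add, map_add]
          ring
        · rw [ht, map_sub, map_sub, hφsingle, hφsingle, hφsingle, one_mul, one_mul, one_mul]
          show (ω₁ + ω₂) (uZ M₁ σ₁) - ω₁ (uZ M₁ σ₁) - ω₂ (uZ M₁ σ₁) = 0
          rw [LinearMap.add_apply]
          ring
        · rw [ht, map_sub, hφsingle, hφsingle, one_mul]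
          show ω₁ (uZ M₁ (q • σ₁)) - algebraMap ℚ ↥K q * ω₁ (uZ M₁ σ₁) = 0
          rw [huZ_smul, map_smul, smul_eq_mul]
          ring
        · rw [ht, map_sub, hφsingle, hφsingle, one_mul]
          show (c • ω₁) (uZ M₁ σ₁) - c * ω₁ (uZ M₁ σ₁) = 0
          rw [LinearMap.smul_apply, smul_eq_mul]
          ring
        · have hP5 : P5 t := h5
          have hwobj : wobj t = {hP5.choose, hP5.choose_spec.choose} := dif_pos hP5
          have hM₁O : hP5.choose ∈ O := by
            refine Finset.mem_insert_of_mem (Finset.mem_biUnion.mpr ⟨t, ht, ?_⟩)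
            rw [hwobj]
            exact Finset.mem_insert_self _ _
          have hN₁O : hP5.choose_spec.choose ∈ O := by
            refine Finset.mem_insert_of_mem (Finset.mem_biUnion.mpr ⟨t, ht, ?_⟩)
            rw [hwobj]
            exact Finset.mem_insert_of_mem (Finset.mem_singleton_self _)
          obtain ⟨α, σ₁, ω₁, htt⟩ := hP5.choose_spec.choose_spec
          rw [htt, map_sub, hφsingle, hφsingle, one_mul, one_mul]
          show (ω₁.comp (HdR.H.map α).hom) (uZ hP5.choose σ₁)
              - ω₁ (uZ hP5.choose_spec.choose (HB.H.map α σ₁)) = 0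
          rw [LinearMap.comp_apply, huZ_nat _ _ hM₁O hN₁O α σ₁]
          ring
      have hφ0 : φ (Finsupp.single ⟨M, (σ, ω)⟩ (1 : ↥K)) = 0 := by
        have hle : Submodule.span ↥K (T : Set (FreeMod A K HB HdR)) ≤ LinearMap.ker φ :=
          Submodule.span_le.mpr (fun t ht => hφT t ht)
        exact hle hTspan
      have hφval : φ (Finsupp.single ⟨M, (σ, ω)⟩ (1 : ↥K))
          = ω (HdR.H.map (pb M hMO) ξ) := by
        rw [hφsingle, one_mul]
        show ω (uZ M σ) = ω (HdR.H.map (pb M hMO) ξ)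
        rw [huZO M hMO, ← hst, hu_val]
      rw [hφ0] at hφval
      exact hξne hφval.symm
  · -- Reverse direction: the exact sequence criterion implies injectivity.
    intro hses
    rcases isEmpty_or_nonempty A with hA | hA
    · have hFree : Subsingleton (FreeMod A K HB HdR) := by
        constructor
        intro a b
        ext z
        exact (hA.false z.1).elim
      have hPA : Subsingleton (PA A K HB HdR) :=
        (Submodule.Quotient.mk_surjective _).subsingleton
      intro x y _
      exact Subsingleton.elim x y
    · rw [injective_iff_map_eq_zero]
      intro a ha
      obtain ⟨x, rfl⟩ := Submodule.Quotient.mk_surjective _ a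
      obtain ⟨X, σ, ω, hrepr⟩ := per_repr x
      rw [hrepr] at ha ⊢
      have hval : evalInt A K HB HdR P X σ ω = 0 := by
        rw [← evalFree_single P X σ ω]
        have h2 : ((PRel A K HB HdR).liftQ (evalFree A K HB HdR P) hRel)
            (Submodule.Quotient.mk (Finsupp.single ⟨X, (σ, ω)⟩ (1 : ↥K)))
            = evalFree A K HB HdR P (Finsupp.single ⟨X, (σ, ω)⟩ (1 : ↥K)) :=
          Submodule.liftQ_apply _ _ _
        rw [← h2]
        exact ha
      obtain ⟨N', N, f, g, w, _, hσ, hω⟩ := hses X σ ω hval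
      obtain ⟨σ', hσ'⟩ := hσ
      obtain ⟨μ, hμ⟩ := hω
      rw [← hσ', ← hμ,
        show (HdR.H.map g).hom.dualMap μ = μ.comp (HdR.H.map g).hom from rfl,
        ← per_mor f σ' (μ.comp (HdR.H.map g).hom)]
      have hzero : (μ.comp (HdR.H.map g).hom).comp (HdR.H.map f).hom = (0 :
          Module.Dual ↥K (HdR.H.obj N')) := by
        ext x
        have h0 : HdR.H.map (f ≫ g) x = 0 := by rw [w, HdR.H.map_zero]; rfl
        rw [LinearMap.comp_apply, LinearMap.comp_apply, ← fib_map_comp_apply, h0, map_zero]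
        rfl
      rw [hzero, per_zeroR]
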